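/- arXiv:1308.3314 — 2 statements merged into one kernel-verified Lean document; each statement's English description precedes it below -/
import Mathlib

section
/- Let d, k ≥ 1, let K ⊆ ℝ^d be compact, and let g : ℝ^d → ℝ be bounded and measurable. Define W_g(c) = ∫_K min_{j=1,…,k} ‖x − c_j‖² g(x) dx for c = (c_1,…,c_k) ∈ (ℝ^d)^k. If c has pairwise distinct centers, then for every direction c' = (c'_1,…,c'_k) ∈ (ℝ^d)^k the directional derivative of W_g at c along c' exists and equals −2 Σ_{j=1}^k ∫_{V_j(c) ∩ K} ⟨x − c_j, c'_j⟩ g(x) dx, where ⟨·,·⟩ is the Euclidean inner product. -/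
open MeasureTheory RealInnerProductSpace

lemma vq_infi_eq_inf' {k : ℕ} (hne : (Finset.univ : Finset (Fin k)).Nonempty) (f : Fin k → ℝ) :
    (⨅ j, f j) = Finset.univ.inf' hne f := by
  rw [Finset.inf'_eq_csInf_image, Finset.coe_univ, Set.image_univ, iInf]

lemma vq_inf'_diff_bound {α : Type*} (s : Finset α) (hs : s.Nonempty) (a b : α → ℝ) (δ : ℝ)
    (h : ∀ j ∈ s, |a j - b j| ≤ δ) : |s.inf' hs a - s.inf' hs b| ≤ δ := by
  have key : ∀ (a b : α → ℝ), (∀ j ∈ s, |a j - b j| ≤ δ) →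
      s.inf' hs a - s.inf' hs b ≤ δ := by
    intro a b h
    obtain ⟨j, hj, hjeq⟩ := Finset.exists_mem_eq_inf' hs b
    have h1 : s.inf' hs a ≤ a j := Finset.inf'_le _ hj
    have h2 := (abs_le.mp (h j hj)).2
    rw [hjeq]; linarith
  rw [abs_le]
  constructor
  · have := key b a (fun j hj => by rw [abs_sub_comm]; exact h j hj); linarith
  · exact key a b h

lemma vq_norm_sub_smul_sq {d : ℕ} (a b : EuclideanSpace ℝ (Fin d)) (h : ℝ) :
    ‖a - h • b‖ ^ 2 = ‖a‖ ^ 2 - 2 * (h * ⟪a, b⟫) + h ^ 2 * ‖b‖ ^ 2 := by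
  rw [norm_sub_sq_real, real_inner_smul_right, norm_smul, mul_pow]
  simp [Real.norm_eq_abs, sq_abs]

lemma vq_cont_inf' {ι X : Type*} [TopologicalSpace X] (s : Finset ι) (hs : s.Nonempty)
    (f : ι → X → ℝ) (hf : ∀ i, Continuous (f i)) :
    Continuous fun x => s.inf' hs fun i => f i x :=
  Continuous.finset_inf'_apply hs fun i _ => hf i

lemma vq_bisector_null {d : ℕ} (a b : EuclideanSpace ℝ (Fin d)) (hab : a ≠ b) :
    volume {x : EuclideanSpace ℝ (Fin d) | ‖x - a‖ = ‖x - b‖} = 0 := by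
  have : {x : EuclideanSpace ℝ (Fin d) | ‖x - a‖ = ‖x - b‖}
      = (AffineSubspace.perpBisector a b : Set (EuclideanSpace ℝ (Fin d))) := by
    ext x
    simp [AffineSubspace.mem_perpBisector_iff_dist_eq, dist_eq_norm]
  rw [this]
  exact Measure.addHaar_affineSubspace _ _ (by simpa using hab)

/-- The Voronoi cell of index `j` for the codebook `c`. -/
def voronoiCell {d k : ℕ} (c : Fin k → EuclideanSpace ℝ (Fin d)) (j : Fin k) :
    Set (EuclideanSpace ℝ (Fin d)) :=
  {x | ∀ u : Fin k, ‖x - c j‖ ≤ ‖x - c u‖}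

set_option maxHeartbeats 1000000 in
/-- For bounded measurable `g` and a codebook `c` with pairwise distinct
centers, the directional derivative of the weighted distortion
`W_g(c) = ∫_K min_j ‖x − c_j‖² g(x) dx` at `c` along any direction `c'` exists and equals
`−2 Σ_j ∫_{V_j(c) ∩ K} ⟪x − c_j, c'_j⟫ g(x) dx`. -/
theorem directional_derivative_of_weighted_distortion
    (d k : ℕ) (hd : 1 ≤ d) (hk : 1 ≤ k)
    (K : Set (EuclideanSpace ℝ (Fin d))) (hK : IsCompact K)
    (g : EuclideanSpace ℝ (Fin d) → ℝ)
    (hg_bdd : ∃ M : ℝ, ∀ x, |g x| ≤ M) (hg_meas : Measurable g)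
    (W : (Fin k → EuclideanSpace ℝ (Fin d)) → ℝ)
    (hW : W = fun c => ∫ x in K, (⨅ j : Fin k, ‖x - c j‖ ^ 2) * g x)
    (c : Fin k → EuclideanSpace ℝ (Fin d))
    (hc : Function.Injective c) :
    ∀ c' : Fin k → EuclideanSpace ℝ (Fin d),
      Filter.Tendsto (fun h : ℝ => (W (c + h • c') - W c) / h)
        (nhdsWithin 0 {0}ᶜ)
        (nhds (-2 * ∑ j : Fin k, ∫ x in voronoiCell c j ∩ K, ⟪x - c j, c' j⟫ * g x)) := by
  intro c'
  obtain ⟨M, hM⟩ := hg_bdd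
  have hM0 : 0 ≤ M := le_trans (abs_nonneg _) (hM 0)
  have hne : (Finset.univ : Finset (Fin k)).Nonempty := ⟨⟨0, hk⟩, Finset.mem_univ _⟩
  haveI : Fact ((volume : Measure (EuclideanSpace ℝ (Fin d))) K < ⊤) := ⟨hK.measure_lt_top⟩
  set q : ℝ → EuclideanSpace ℝ (Fin d) → ℝ :=
    fun h x => Finset.univ.inf' hne fun j => ‖x - (c j + h • c' j)‖ ^ 2 with hq
  have hqcont : ∀ h, Continuous (q h) := fun h =>
    vq_cont_inf' _ hne _ fun j => ((continuous_id.sub continuous_const).norm).pow 2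
  -- rewriting W
  have hWh : ∀ h : ℝ, W (c + h • c') = ∫ x in K, q h x * g x := by
    intro h
    rw [hW]
    have : ∀ x : EuclideanSpace ℝ (Fin d),
        (⨅ j, ‖x - (c + h • c') j‖ ^ 2) = q h x := by
      intro x
      rw [vq_infi_eq_inf' hne]
      simp only [hq, Pi.add_apply, Pi.smul_apply]
    simp only [this]
  have hWc : W c = ∫ x in K, q 0 x * g x := by
    have := hWh 0
    simpa using this
  -- integrability helper
  have hIntOn : ∀ φ : EuclideanSpace ℝ (Fin d) → ℝ, Continuous φ →
      IntegrableOn (fun x => φ x * g x) K := by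
    intro φ hφ
    have h1 : IntegrableOn φ K := hφ.continuousOn.integrableOn_compact hK
    have h2 : Integrable (fun x => g x * φ x) (volume.restrict K) :=
      h1.bdd_mul hg_meas.aestronglyMeasurable.restrict
        (Filter.Eventually.of_forall fun x => by simpa [Real.norm_eq_abs] using hM x)
    simpa [mul_comm, IntegrableOn] using h2
  have hqint : ∀ h, IntegrableOn (fun x => q h x * g x) K := fun h => hIntOn _ (hqcont h)
  -- Voronoi cells are measurable
  have hVmeas : ∀ j, MeasurableSet (voronoiCell c j) := by
    intro j
    have : voronoiCell c j = ⋂ u, {x | ‖x - c j‖ ≤ ‖x - c u‖} := by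
      ext x; simp [voronoiCell, Set.mem_iInter]
    rw [this]
    exact MeasurableSet.iInter fun u =>
      measurableSet_le ((continuous_id.sub continuous_const).norm.measurable)
        ((continuous_id.sub continuous_const).norm.measurable)
  have hinner : ∀ j, Continuous fun x : EuclideanSpace ℝ (Fin d) => ⟪x - c j, c' j⟫ :=
    fun j => (continuous_id.sub continuous_const).inner continuous_const
  have hindint : ∀ j, Integrable
      ((voronoiCell c j).indicator fun x => ⟪x - c j, c' j⟫ * g x) (volume.restrict K) :=
    fun j => (hIntOn _ (hinner j)).indicator (hVmeas j)
  -- the limit function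
  set f₀ : EuclideanSpace ℝ (Fin d) → ℝ := fun x =>
    -2 * ∑ j, (voronoiCell c j).indicator (fun y => ⟪y - c j, c' j⟫ * g y) x with hf₀
  have htarget : ∫ x in K, f₀ x
      = -2 * ∑ j : Fin k, ∫ x in voronoiCell c j ∩ K, ⟪x - c j, c' j⟫ * g x := by
    simp only [hf₀]
    rw [integral_const_mul, integral_finset_sum _ fun j _ => hindint j]
    congr 1
    refine Finset.sum_congr rfl fun j _ => ?_
    rw [integral_indicator (hVmeas j), Measure.restrict_restrict (hVmeas j)]
  -- bound
  obtain ⟨R₀, hR₀⟩ := hK.isBounded.exists_norm_le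
  set R : ℝ := max R₀ 0 with hRdef
  have hR : ∀ x ∈ K, ‖x‖ ≤ R := fun x hx => (hR₀ x hx).trans (le_max_left _ _)
  have hRnn : (0:ℝ) ≤ R := le_max_right _ _
  set C : ℝ := ∑ j : Fin k, (2 * (R + ‖c j‖) * ‖c' j‖ + ‖c' j‖ ^ 2) with hCdef
  have hC0 : 0 ≤ C := Finset.sum_nonneg fun j _ => by positivity
  have hCj : ∀ (j : Fin k) (x : EuclideanSpace ℝ (Fin d)) (h : ℝ), x ∈ K → |h| ≤ 1 →
      |‖x - (c j + h • c' j)‖ ^ 2 - ‖x - c j‖ ^ 2| ≤ |h| * C := by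
    intro j x h hx hh
    have hxc : ‖x - c j‖ ≤ R + ‖c j‖ :=
      (norm_sub_le _ _).trans (add_le_add_left (hR x hx) _)
    have key : ‖x - (c j + h • c' j)‖ ^ 2 - ‖x - c j‖ ^ 2
        = h * (h * ‖c' j‖ ^ 2 - 2 * ⟪x - c j, c' j⟫) := by
      rw [sub_add_eq_sub_sub, vq_norm_sub_smul_sq]; ring
    rw [key, abs_mul]
    have hterm : 2 * (R + ‖c j‖) * ‖c' j‖ + ‖c' j‖ ^ 2 ≤ C :=
      Finset.single_le_sum (f := fun j : Fin k => 2 * (R + ‖c j‖) * ‖c' j‖ + ‖c' j‖ ^ 2)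
        (fun i _ => by positivity) (Finset.mem_univ j)
    have habs : |h * ‖c' j‖ ^ 2 - 2 * ⟪x - c j, c' j⟫|
        ≤ |h * ‖c' j‖ ^ 2| + |2 * ⟪x - c j, c' j⟫| := abs_sub _ _
    have h1 : |h * ‖c' j‖ ^ 2| ≤ ‖c' j‖ ^ 2 := by
      rw [abs_mul, abs_of_nonneg (by positivity : (0:ℝ) ≤ ‖c' j‖ ^ 2)]
      calc |h| * ‖c' j‖ ^ 2 ≤ 1 * ‖c' j‖ ^ 2 := by
            exact mul_le_mul_of_nonneg_right hh (by positivity)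
        _ = ‖c' j‖ ^ 2 := one_mul _
    have h2 : |2 * ⟪x - c j, c' j⟫| ≤ 2 * ((R + ‖c j‖) * ‖c' j‖) := by
      rw [abs_mul, abs_of_nonneg (by norm_num : (0:ℝ) ≤ 2)]
      have := abs_real_inner_le_norm (x - c j) (c' j)
      have := mul_le_mul_of_nonneg_right hxc (norm_nonneg (c' j))
      linarith [abs_real_inner_le_norm (x - c j) (c' j)]
    have : |h * ‖c' j‖ ^ 2 - 2 * ⟪x - c j, c' j⟫| ≤ C := by
      calc |h * ‖c' j‖ ^ 2 - 2 * ⟪x - c j, c' j⟫|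
          ≤ ‖c' j‖ ^ 2 + 2 * ((R + ‖c j‖) * ‖c' j‖) := by linarith
        _ ≤ C := by nlinarith [hterm]
    exact mul_le_mul_of_nonneg_left this (abs_nonneg h)
  have hqbound : ∀ (x : EuclideanSpace ℝ (Fin d)) (h : ℝ), x ∈ K → |h| ≤ 1 →
      |q h x - q 0 x| ≤ |h| * C := by
    intro x h hx hh
    simp only [hq, zero_smul, add_zero]
    exact vq_inf'_diff_bound _ hne _ _ _ (fun j _ => by
      have := hCj j x h hx hh
      simpa using this)
  -- the difference quotient family
  set F : ℝ → EuclideanSpace ℝ (Fin d) → ℝ :=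
    fun h x => (q h x * g x - q 0 x * g x) / h with hF
  have hFmeas : ∀ᶠ h in nhdsWithin (0:ℝ) {0}ᶜ,
      AEStronglyMeasurable (F h) (volume.restrict K) :=
    Filter.Eventually.of_forall fun h =>
      ((((hqcont h).measurable.mul hg_meas).sub
        ((hqcont 0).measurable.mul hg_meas)).div_const h).aestronglyMeasurable
  have hsmall : ∀ᶠ h : ℝ in nhdsWithin 0 {0}ᶜ, h ≠ 0 ∧ |h| ≤ 1 := by
    have h1 : ∀ᶠ h : ℝ in nhdsWithin 0 {0}ᶜ, h ≠ 0 := self_mem_nhdsWithin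
    have h2 : ∀ᶠ h : ℝ in nhdsWithin 0 {0}ᶜ, |h| ≤ 1 := by
      have h3 : ∀ᶠ h : ℝ in nhds 0, |h| ≤ 1 := by
        filter_upwards [Metric.ball_mem_nhds (0:ℝ) one_pos] with h hh
        rw [Metric.mem_ball, Real.dist_eq, sub_zero] at hh
        exact hh.le
      exact h3.filter_mono nhdsWithin_le_nhds
    exact h1.and h2
  have hbound : ∀ᶠ h in nhdsWithin (0:ℝ) {0}ᶜ,
      ∀ᵐ x ∂(volume.restrict K), ‖F h x‖ ≤ C * M := by
    filter_upwards [hsmall] with h hh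
    refine (ae_restrict_iff' hK.measurableSet).2 (Filter.Eventually.of_forall fun x hx => ?_)
    have heq : F h x = ((q h x - q 0 x) * g x) / h := by simp only [hF]; ring
    rw [Real.norm_eq_abs, heq, abs_div, abs_mul, div_le_iff₀ (abs_pos.mpr hh.1)]
    calc |q h x - q 0 x| * |g x| ≤ (|h| * C) * M :=
          mul_le_mul (hqbound x h hx hh.2) (hM x) (abs_nonneg _) (by positivity)
      _ = C * M * |h| := by ring
  -- a.e. pointwise convergence
  have hnullae : ∀ᵐ x : EuclideanSpace ℝ (Fin d) ∂volume,
      ∀ j u : Fin k, j ≠ u → ‖x - c j‖ ≠ ‖x - c u‖ := by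
    rw [MeasureTheory.ae_all_iff]
    intro j
    rw [MeasureTheory.ae_all_iff]
    intro u
    rcases eq_or_ne j u with rfl | hju
    · exact Filter.Eventually.of_forall fun x h => absurd rfl h
    · have hz := vq_bisector_null (c j) (c u) (fun hcc => hju (hc hcc))
      have := measure_eq_zero_iff_ae_notMem.mp hz
      filter_upwards [this] with x hx _
      exact hx
  have hnull : ∀ᵐ x ∂(volume.restrict K),
      ∀ j u : Fin k, j ≠ u → ‖x - c j‖ ≠ ‖x - c u‖ := ae_restrict_of_ae hnullae
  have hlim : ∀ᵐ x ∂(volume.restrict K),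
      Filter.Tendsto (fun h => F h x) (nhdsWithin 0 {0}ᶜ) (nhds (f₀ x)) := by
    filter_upwards [hnull] with x hx
    obtain ⟨j₀, -, hj₀⟩ := Finset.exists_min_image Finset.univ (fun j => ‖x - c j‖) hne
    have hmin : ∀ u, ‖x - c j₀‖ ≤ ‖x - c u‖ := fun u => hj₀ u (Finset.mem_univ u)
    have hstrict : ∀ u, u ≠ j₀ → ‖x - c j₀‖ < ‖x - c u‖ := fun u hu =>
      lt_of_le_of_ne (hmin u) (hx j₀ u (Ne.symm hu))
    have hf₀x : f₀ x = -2 * (⟪x - c j₀, c' j₀⟫ * g x) := by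
      simp only [hf₀]
      congr 1
      rw [Finset.sum_eq_single j₀]
      · exact Set.indicator_of_mem (show x ∈ voronoiCell c j₀ from fun u => hmin u) _
      · intro u _ hu
        refine Set.indicator_of_notMem (fun hmem => ?_) _
        exact absurd (hmem j₀) (not_le.mpr (hstrict u hu))
      · intro hj; exact absurd (Finset.mem_univ j₀) hj
    have hq0 : q 0 x = ‖x - c j₀‖ ^ 2 := by
      simp only [hq, zero_smul, add_zero]
      refine le_antisymm (Finset.inf'_le _ (Finset.mem_univ j₀)) ?_
      exact Finset.le_inf' _ _ fun u _ => pow_le_pow_left₀ (norm_nonneg _) (hmin u) 2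
    have hev : ∀ᶠ h : ℝ in nhds 0, q h x = ‖x - (c j₀ + h • c' j₀)‖ ^ 2 := by
      have hall : ∀ᶠ h : ℝ in nhds 0,
          ∀ u, ‖x - (c j₀ + h • c' j₀)‖ ≤ ‖x - (c u + h • c' u)‖ := by
        rw [Filter.eventually_all]
        intro u
        rcases eq_or_ne u j₀ with rfl | hu
        · exact Filter.Eventually.of_forall fun h => le_rfl
        · have hcont : Continuous fun h : ℝ =>
              ‖x - (c u + h • c' u)‖ - ‖x - (c j₀ + h • c' j₀)‖ := by
            apply Continuous.sub <;>
              exact (continuous_const.sub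
                (continuous_const.add (continuous_id.smul continuous_const))).norm
          have h0 : (0:ℝ) < ‖x - (c u + (0:ℝ) • c' u)‖ - ‖x - (c j₀ + (0:ℝ) • c' j₀)‖ := by
            simpa using sub_pos.mpr (hstrict u hu)
          have := (hcont.tendsto 0).eventually (eventually_gt_nhds h0)
          filter_upwards [this] with h hh
          linarith [hh]
      filter_upwards [hall] with h hh
      simp only [hq]
      refine le_antisymm (Finset.inf'_le _ (Finset.mem_univ j₀)) ?_
      exact Finset.le_inf' _ _ fun u _ => pow_le_pow_left₀ (norm_nonneg _) (hh u) 2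
    have hev2 : ∀ᶠ h : ℝ in nhdsWithin 0 {0}ᶜ,
        F h x = (-2 * ⟪x - c j₀, c' j₀⟫ + h * ‖c' j₀‖ ^ 2) * g x := by
      filter_upwards [hev.filter_mono nhdsWithin_le_nhds, self_mem_nhdsWithin] with h hh hh0
      have hh0' : h ≠ 0 := hh0
      simp only [hF]
      rw [hh, hq0, sub_add_eq_sub_sub, vq_norm_sub_smul_sq]
      field_simp
      ring
    have hmain : Filter.Tendsto (fun h : ℝ => (-2 * ⟪x - c j₀, c' j₀⟫ + h * ‖c' j₀‖ ^ 2) * g x)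
        (nhdsWithin 0 {0}ᶜ)
        (nhds ((-2 * ⟪x - c j₀, c' j₀⟫ + 0 * ‖c' j₀‖ ^ 2) * g x)) := by
      apply Filter.Tendsto.mono_left _ nhdsWithin_le_nhds
      exact Continuous.tendsto (by fun_prop) 0
    have heqv : (-2 * ⟪x - c j₀, c' j₀⟫ + 0 * ‖c' j₀‖ ^ 2) * g x
        = -2 * (⟪x - c j₀, c' j₀⟫ * g x) := by ring
    have hev2' : (fun h : ℝ => (-2 * ⟪x - c j₀, c' j₀⟫ + h * ‖c' j₀‖ ^ 2) * g x)
        =ᶠ[nhdsWithin (0:ℝ) {0}ᶜ] fun h => F h x := hev2.mono fun h e => e.symm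
    rw [hf₀x, ← heqv]
    exact hmain.congr' hev2'
  -- dominated convergence
  have hdct := MeasureTheory.tendsto_integral_filter_of_dominated_convergence
    (μ := volume.restrict K) (fun _ => C * M) hFmeas hbound (integrable_const _) hlim
  rw [htarget] at hdct
  refine Filter.Tendsto.congr' ?_ hdct
  filter_upwards [self_mem_nhdsWithin] with h hh0
  have hh0' : h ≠ 0 := hh0
  have h1 : ∫ x in K, F h x = (∫ x in K, (q h x * g x - q 0 x * g x)) / h := by
    simp only [hF]
    exact integral_div h _
  rw [h1, integral_sub (hqint h) (hqint 0), hWh h, hWc]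
end

section
/- Let d, k ≥ 1, let K ⊆ ℝ^d be compact, and let g : ℝ^d → ℝ be bounded and measurable. Define W_g(c) = ∫_K min_{j=1,…,k} ‖x − c_j‖² g(x) dx for c = (c_1,…,c_k) ∈ (ℝ^d)^k. Suppose c has pairwise distinct centers and ∫_{V_j(c) ∩ K} g(x) dx ≠ 0 for every j ∈ {1,…,k}. Then the directional derivative of W_g at c along every canonical basis direction of (ℝ^d)^k vanishes if and only if for every j, c_j = (∫_{V_j(c) ∩ K} x g(x) dx) / (∫_{V_j(c) ∩ K} g(x) dx). -/
open MeasureTheory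

section FOCAux

open Filter

variable {d k : ℕ}

local notation "E" => EuclideanSpace ℝ (Fin d)

private lemma aux_voronoi_closed (c : Fin k → EuclideanSpace ℝ (Fin d)) (j : Fin k) :
    IsClosed (voronoiCell c j) := by
  have : voronoiCell c j
      = ⋂ u : Fin k, {x : EuclideanSpace ℝ (Fin d) | ‖x - c j‖ ≤ ‖x - c u‖} := by
    ext x; simp [voronoiCell]
  rw [this]
  exact isClosed_iInter fun u => isClosed_le
    ((continuous_id.sub continuous_const).norm) ((continuous_id.sub continuous_const).norm)

private lemma aux_bisector_null (a b : EuclideanSpace ℝ (Fin d)) (hab : a ≠ b) :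
    volume {x : EuclideanSpace ℝ (Fin d) | ‖x - a‖ = ‖x - b‖} = 0 := by
  have : {x : EuclideanSpace ℝ (Fin d) | ‖x - a‖ = ‖x - b‖}
      = (AffineSubspace.perpBisector a b : Set (EuclideanSpace ℝ (Fin d))) := by
    ext x
    simp [AffineSubspace.mem_perpBisector_iff_dist_eq', dist_eq_norm, norm_sub_rev x]
  rw [this]
  exact Measure.addHaar_affineSubspace _ _ (by simpa using hab)

private lemma aux_iInf_eq [Nonempty (Fin k)] (f : Fin k → ℝ) (j : Fin k)
    (h : ∀ u, f j ≤ f u) : ⨅ u, f u = f j :=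
  le_antisymm (ciInf_le (Set.Finite.bddBelow (Set.finite_range f)) j) (le_ciInf h)

private lemma aux_cont_iInf [Nonempty (Fin k)] (c : Fin k → EuclideanSpace ℝ (Fin d)) :
    Continuous fun x : EuclideanSpace ℝ (Fin d) => ⨅ u, ‖x - c u‖ ^ 2 := by
  have : (fun x : EuclideanSpace ℝ (Fin d) => ⨅ u, ‖x - c u‖ ^ 2)
      = fun x => Finset.univ.inf' Finset.univ_nonempty (fun u => ‖x - c u‖ ^ 2) := by
    funext x; rw [Finset.inf'_univ_eq_ciInf]
  rw [this]
  exact continuous_iff_continuousAt.2 fun x => ContinuousAt.finset_inf'_apply _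
    (fun u _ => ((continuous_id.sub continuous_const).norm.pow 2).continuousAt)

private lemma aux_exp (x y e : EuclideanSpace ℝ (Fin d)) (he : ‖e‖ = 1) (h : ℝ) :
    ‖x - (y + h • e)‖ ^ 2 = ‖x - y‖ ^ 2 - 2 * h * (inner ℝ (x - y) e : ℝ) + h ^ 2 := by
  rw [sub_add_eq_sub_sub, norm_sub_sq_real, real_inner_smul_right, norm_smul, he]
  simp [mul_pow, sq_abs]
  ring

private lemma aux_bound [Nonempty (Fin k)] (c : Fin k → EuclideanSpace ℝ (Fin d)) (j : Fin k)
    (e : EuclideanSpace ℝ (Fin d)) (he : ‖e‖ = 1)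
    (x : EuclideanSpace ℝ (Fin d)) (h : ℝ) (hh : |h| ≤ 1) :
    |(⨅ u, ‖x - (c + h • (Pi.single j e : Fin k → EuclideanSpace ℝ (Fin d))) u‖ ^ 2)
        - ⨅ u, ‖x - c u‖ ^ 2|
      ≤ |h| * (2 * ‖x - c j‖ + 1) := by
  set B := |h| * (2 * ‖x - c j‖ + 1) with hB
  have hB0 : 0 ≤ B := by positivity
  have key : ∀ u,
      |‖x - (c + h • (Pi.single j e : Fin k → EuclideanSpace ℝ (Fin d))) u‖ ^ 2
        - ‖x - c u‖ ^ 2| ≤ B := by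
    intro u
    rcases eq_or_ne u j with rfl | hu
    · have heq : (c + h • (Pi.single u e : Fin k → EuclideanSpace ℝ (Fin d))) u
          = c u + h • e := by simp
      rw [heq, aux_exp x (c u) e he h]
      have hA : |(inner ℝ (x - c u) e : ℝ)| ≤ ‖x - c u‖ := by
        simpa [he] using abs_real_inner_le_norm (x - c u) e
      have hre : ‖x - c u‖ ^ 2 - 2 * h * (inner ℝ (x - c u) e : ℝ) + h ^ 2 - ‖x - c u‖ ^ 2
          = h * (h - 2 * (inner ℝ (x - c u) e : ℝ)) := by ring
      rw [hre, abs_mul]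
      have h2 : |h - 2 * (inner ℝ (x - c u) e : ℝ)| ≤ 2 * ‖x - c u‖ + 1 := by
        have t := abs_sub h (2 * (inner ℝ (x - c u) e : ℝ))
        rw [abs_mul, abs_two] at t
        linarith
      calc |h| * |h - 2 * (inner ℝ (x - c u) e : ℝ)| ≤ |h| * (2 * ‖x - c u‖ + 1) :=
            mul_le_mul_of_nonneg_left h2 (abs_nonneg h)
      _ = B := rfl
    · have heq : (c + h • (Pi.single j e : Fin k → EuclideanSpace ℝ (Fin d))) u = c u := by
        simp [Pi.single_eq_of_ne hu]
      rw [heq]; simpa using hB0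
  have hbdd : ∀ (c' : Fin k → EuclideanSpace ℝ (Fin d)),
      BddBelow (Set.range fun u => ‖x - c' u‖ ^ 2) :=
    fun c' => Set.Finite.bddBelow (Set.finite_range _)
  have h1 : ∀ u,
      (⨅ u, ‖x - (c + h • (Pi.single j e : Fin k → EuclideanSpace ℝ (Fin d))) u‖ ^ 2) - B
        ≤ ‖x - c u‖ ^ 2 := by
    intro u
    have t1 : (⨅ u, ‖x - (c + h • (Pi.single j e : Fin k → EuclideanSpace ℝ (Fin d))) u‖ ^ 2)
        ≤ ‖x - (c + h • (Pi.single j e : Fin k → EuclideanSpace ℝ (Fin d))) u‖ ^ 2 :=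
      ciInf_le (hbdd _) u
    have t2 := key u
    rw [abs_le] at t2
    linarith [t2.1, t2.2]
  have h0 : ∀ u, (⨅ u, ‖x - c u‖ ^ 2) - B
      ≤ ‖x - (c + h • (Pi.single j e : Fin k → EuclideanSpace ℝ (Fin d))) u‖ ^ 2 := by
    intro u
    have t1 : (⨅ u, ‖x - c u‖ ^ 2) ≤ ‖x - c u‖ ^ 2 := ciInf_le (hbdd _) u
    have t2 := key u
    rw [abs_le] at t2
    linarith [t2.1, t2.2]
  have H1 := le_ciInf h1
  have H0 := le_ciInf h0
  rw [abs_sub_le_iff]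
  constructor <;> linarith


private lemma aux_pointwise [Nonempty (Fin k)] (c : Fin k → E) (j : Fin k) (e : E) (he : ‖e‖ = 1)
    (x : E) (hx : ∀ u v : Fin k, u ≠ v → ‖x - c u‖ ≠ ‖x - c v‖) :
    Tendsto (fun h : ℝ =>
        ((⨅ u, ‖x - (c + h • (Pi.single j e : Fin k → E)) u‖ ^ 2) - ⨅ u, ‖x - c u‖ ^ 2) / h)
      (nhdsWithin 0 {0}ᶜ)
      (nhds (Set.indicator (voronoiCell c j) (fun y => -(2 * (inner ℝ (y - c j) e : ℝ))) x)) := by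
  obtain ⟨j₀, hj₀⟩ := Finite.exists_min (fun u => ‖x - c u‖)
  have hstrict : ∀ u, u ≠ j₀ → ‖x - c j₀‖ < ‖x - c u‖ :=
    fun u hu => lt_of_le_of_ne (hj₀ u) (hx j₀ u (Ne.symm hu))
  set F : ℝ → Fin k → ℝ := fun h u => ‖x - (c + h • (Pi.single j e : Fin k → E)) u‖ ^ 2 with hF
  have hFj : ∀ h, F h j = ‖x - c j‖ ^ 2 - 2 * h * (inner ℝ (x - c j) e : ℝ) + h ^ 2 := by
    intro h
    have : (c + h • (Pi.single j e : Fin k → E)) j = c j + h • e := by simp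
    rw [hF]; simp only [this]; exact aux_exp x (c j) e he h
  have hFu : ∀ h u, u ≠ j → F h u = ‖x - c u‖ ^ 2 := by
    intro h u hu
    have : (c + h • (Pi.single j e : Fin k → E)) u = c u := by simp [Pi.single_eq_of_ne hu]
    rw [hF]; simp only [this]
  have hFcont : ∀ u, Continuous fun h => F h u := by
    intro u
    rcases eq_or_ne u j with rfl | hu
    · simp only [hFj]; continuity
    · simp only [hFu _ u hu]; exact continuous_const
  have hF0 : ∀ u, F 0 u = ‖x - c u‖ ^ 2 := by
    intro u
    rcases eq_or_ne u j with rfl | hu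
    · rw [hFj]; ring
    · exact hFu 0 u hu
  -- eventually the strict minimizer stays strict
  have hev : ∀ᶠ h in nhds (0 : ℝ), ∀ u, u ≠ j₀ → F h j₀ < F h u := by
    rw [eventually_all]
    intro u
    rcases eq_or_ne u j₀ with rfl | hu
    · exact Eventually.of_forall fun h h' => absurd rfl h'
    · have hlt : F 0 j₀ < F 0 u := by
        rw [hF0, hF0]
        exact pow_lt_pow_left₀ (hstrict u hu) (norm_nonneg _) (by norm_num)
      filter_upwards [(hFcont j₀).continuousAt.eventually_lt (hFcont u).continuousAt hlt]
        with h hh _ using hh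
  have hqev : ∀ᶠ h in nhds (0 : ℝ), (⨅ u, F h u) = F h j₀ := by
    filter_upwards [hev] with h hh
    exact aux_iInf_eq _ _ fun u => by
      rcases eq_or_ne u j₀ with rfl | hu
      · exact le_rfl
      · exact (hh u hu).le
  have hq0 : (⨅ u, ‖x - c u‖ ^ 2) = F 0 j₀ := by
    rw [hF0]
    exact aux_iInf_eq _ _ fun u => by
      rcases eq_or_ne u j₀ with rfl | hu
      · exact le_rfl
      · exact pow_le_pow_left₀ (norm_nonneg _) (hj₀ u) 2
  have hquot : ∀ᶠ h in nhdsWithin (0:ℝ) {0}ᶜ,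
      ((⨅ u, F h u) - ⨅ u, ‖x - c u‖ ^ 2) / h = (F h j₀ - F 0 j₀) / h := by
    filter_upwards [hqev.filter_mono nhdsWithin_le_nhds] with h hh
    rw [hh, hq0]
  rcases eq_or_ne j₀ j with rfl | hjj
  · -- the moving center is the strict minimizer
    have hmem : x ∈ voronoiCell c j₀ := fun u => hj₀ u
    rw [Set.indicator_of_mem hmem]
    have heq : ∀ᶠ h in nhdsWithin (0:ℝ) {0}ᶜ,
        -(2 * (inner ℝ (x - c j₀) e : ℝ)) + h
          = ((⨅ u, F h u) - ⨅ u, ‖x - c u‖ ^ 2) / h := by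
      filter_upwards [hquot, self_mem_nhdsWithin] with h hh (hne : h ∈ ({0}ᶜ : Set ℝ))
      rw [hh, hFj, hFj]
      have hne' : h ≠ 0 := hne
      field_simp
      ring
    refine Tendsto.congr' heq ?_
    have : Tendsto (fun h : ℝ => -(2 * (inner ℝ (x - c j₀) e : ℝ)) + h) (nhds 0)
        (nhds (-(2 * (inner ℝ (x - c j₀) e : ℝ)))) := by
      simpa using (continuous_add_left (-(2 * (inner ℝ (x - c j₀) e : ℝ)))).tendsto (0:ℝ)
    exact this.mono_left nhdsWithin_le_nhds
  · -- the minimizer is away from the moving center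
    have hnot : x ∉ voronoiCell c j := by
      intro hxV
      exact hx j j₀ (Ne.symm hjj) (le_antisymm (hxV j₀) (hj₀ j))
    rw [Set.indicator_of_notMem hnot]
    have heq : ∀ᶠ h in nhdsWithin (0:ℝ) {0}ᶜ,
        (0:ℝ) = ((⨅ u, F h u) - ⨅ u, ‖x - c u‖ ^ 2) / h := by
      filter_upwards [hquot] with h hh
      rw [hh, hFu _ _ hjj, hF0]
      simp
    exact Tendsto.congr' heq tendsto_const_nhds
end FOCAux

section FOCMain
open Filter

/-- For bounded measurable `g`, a codebook `c` with pairwise distinct centers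
and nonvanishing masses `∫_{V_j(c) ∩ K} g ≠ 0`, the directional derivatives of the weighted
distortion at `c` along all canonical basis directions vanish iff each `c_j` is the
`g`-weighted centroid of its Voronoi cell (intersected with `K`). -/
theorem first_order_conditions_iff_centroids
    (d k : ℕ) (hd : 1 ≤ d) (hk : 1 ≤ k)
    (K : Set (EuclideanSpace ℝ (Fin d))) (hK : IsCompact K)
    (g : EuclideanSpace ℝ (Fin d) → ℝ)
    (hg_bdd : ∃ M : ℝ, ∀ x, |g x| ≤ M) (hg_meas : Measurable g)
    (W : (Fin k → EuclideanSpace ℝ (Fin d)) → ℝ)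
    (hW : W = fun c => ∫ x in K, (⨅ j : Fin k, ‖x - c j‖ ^ 2) * g x)
    (c : Fin k → EuclideanSpace ℝ (Fin d))
    (hc : Function.Injective c)
    (hmass : ∀ j : Fin k, (∫ x in voronoiCell c j ∩ K, g x) ≠ 0) :
    (∀ (j : Fin k) (ℓ : Fin d),
        Filter.Tendsto
          (fun h : ℝ =>
            (W (c + h • (Pi.single j (EuclideanSpace.single ℓ (1 : ℝ)) : Fin k → EuclideanSpace ℝ (Fin d))) - W c) / h)
          (nhdsWithin 0 {0}ᶜ) (nhds 0)) ↔
      ∀ j : Fin k,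
        c j = (∫ x in voronoiCell c j ∩ K, g x)⁻¹ •
          ∫ x in voronoiCell c j ∩ K, g x • x := by
  classical
  obtain ⟨M, hM⟩ := hg_bdd
  haveI : Nonempty (Fin k) := ⟨⟨0, hk⟩⟩
  haveI : NeBot (nhdsWithin (0:ℝ) {0}ᶜ) := by
    exact Module.punctured_nhds_neBot ℝ ℝ 0
  have hM0 : 0 ≤ M := le_trans (abs_nonneg _) (hM 0)
  obtain ⟨R, hR⟩ := hK.isBounded.exists_norm_le
  have hKfin : volume K ≠ ⊤ := hK.measure_lt_top.ne
  have hWval : ∀ c' : Fin k → EuclideanSpace ℝ (Fin d),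
      W c' = ∫ x in K, (⨅ u, ‖x - c' u‖ ^ 2) * g x := fun c' => by rw [hW]
  -- a.e. all distances to distinct centers are distinct
  have hAE : ∀ᵐ x : EuclideanSpace ℝ (Fin d),
      ∀ u v : Fin k, u ≠ v → ‖x - c u‖ ≠ ‖x - c v‖ := by
    refine (ae_all_iff).2 fun u => (ae_all_iff).2 fun v => ?_
    rcases eq_or_ne u v with rfl | huv
    · exact Eventually.of_forall fun x h => absurd rfl h
    · have h0 := aux_bisector_null (c u) (c v) (fun h => huv (hc h))
      rw [ae_iff]
      refine measure_mono_null (fun x hx => ?_) h0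
      have hx' : ¬(u ≠ v → ‖x - c u‖ ≠ ‖x - c v‖) := hx
      have := Classical.not_imp.mp hx'
      exact not_not.mp this.2
  -- integrability of the distortion integrand for any codebook
  have hIntK : ∀ c' : Fin k → EuclideanSpace ℝ (Fin d),
      IntegrableOn (fun x => (⨅ u, ‖x - c' u‖ ^ 2) * g x) K := by
    intro c'
    have hcont := aux_cont_iInf c'
    obtain ⟨C, hC⟩ := hK.exists_bound_of_continuousOn hcont.continuousOn
    refine Measure.integrableOn_of_bounded (M := C * M) hKfin
      (hcont.aestronglyMeasurable.mul hg_meas.aestronglyMeasurable) ?_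
    rw [ae_restrict_iff' hK.measurableSet]
    refine Eventually.of_forall fun x hx => ?_
    rw [norm_mul]
    have h1 := hC x hx
    have h2 := hM x
    rw [Real.norm_eq_abs] at *
    exact mul_le_mul h1 h2 (abs_nonneg _) ((abs_nonneg _).trans h1)
  -- the difference quotient as a single integral
  have hquot : ∀ (j : Fin k) (ℓ : Fin d) (h : ℝ),
      (W (c + h • (Pi.single j (EuclideanSpace.single ℓ (1:ℝ)) : Fin k → EuclideanSpace ℝ (Fin d))) - W c) / h
        = ∫ x in K,
            ((⨅ u, ‖x - (c + h • (Pi.single j (EuclideanSpace.single ℓ (1:ℝ)) : Fin k → EuclideanSpace ℝ (Fin d))) u‖ ^ 2)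
              - ⨅ u, ‖x - c u‖ ^ 2) * g x / h := by
    intro j ℓ h
    rw [hWval, hWval, ← integral_sub (hIntK _) (hIntK c), ← integral_div]
    exact integral_congr_ae (Eventually.of_forall fun x => by ring)
  -- key limit: difference quotients converge to the boundary integral
  have hkey : ∀ (j : Fin k) (ℓ : Fin d),
      Tendsto (fun h : ℝ =>
          (W (c + h • (Pi.single j (EuclideanSpace.single ℓ (1:ℝ)) : Fin k → EuclideanSpace ℝ (Fin d))) - W c) / h)
        (nhdsWithin 0 {0}ᶜ)
        (nhds (∫ x in voronoiCell c j ∩ K,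
          -(2 * (inner ℝ (x - c j) (EuclideanSpace.single ℓ (1:ℝ)) : ℝ)) * g x)) := by
    intro j ℓ
    set e : EuclideanSpace ℝ (Fin d) := EuclideanSpace.single ℓ (1:ℝ) with hedef
    have he : ‖e‖ = 1 := by simp [hedef, EuclideanSpace.norm_single]
    have hIlim : (∫ x in K, Set.indicator (voronoiCell c j)
            (fun y => -(2 * (inner ℝ (y - c j) e : ℝ))) x * g x)
        = ∫ x in voronoiCell c j ∩ K, -(2 * (inner ℝ (x - c j) e : ℝ)) * g x := by
      have heq : ∀ x : EuclideanSpace ℝ (Fin d),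
          Set.indicator (voronoiCell c j) (fun y => -(2 * (inner ℝ (y - c j) e : ℝ))) x * g x
            = Set.indicator (voronoiCell c j)
                (fun y => -(2 * (inner ℝ (y - c j) e : ℝ)) * g y) x := by
        intro x
        by_cases hx : x ∈ voronoiCell c j
        · simp [Set.indicator_of_mem hx]
        · simp [Set.indicator_of_notMem hx]
      simp_rw [heq]
      rw [setIntegral_indicator (aux_voronoi_closed c j).measurableSet, Set.inter_comm]
    rw [← hIlim]
    have hsmall : ∀ᶠ h : ℝ in nhdsWithin 0 {0}ᶜ, |h| ≤ 1 ∧ h ≠ 0 := by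
      have h1 : ∀ᶠ h : ℝ in nhds 0, |h| ≤ 1 := by
        have : Set.Icc (-1:ℝ) 1 ∈ nhds (0:ℝ) := Icc_mem_nhds (by norm_num) (by norm_num)
        filter_upwards [this] with h hh
        rw [abs_le]; exact ⟨hh.1, hh.2⟩
      filter_upwards [h1.filter_mono nhdsWithin_le_nhds, eventually_mem_nhdsWithin]
        with h hh hmem
      exact ⟨hh, hmem⟩
    have hDCT := tendsto_integral_filter_of_dominated_convergence
      (μ := volume.restrict K)
      (F := fun (h : ℝ) (x : EuclideanSpace ℝ (Fin d)) =>
        ((⨅ u, ‖x - (c + h • (Pi.single j e : Fin k → EuclideanSpace ℝ (Fin d))) u‖ ^ 2)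
          - ⨅ u, ‖x - c u‖ ^ 2) * g x / h)
      (f := fun x => Set.indicator (voronoiCell c j)
        (fun y => -(2 * (inner ℝ (y - c j) e : ℝ))) x * g x)
      (bound := fun x => (2 * ‖x - c j‖ + 1) * M)
      (Eventually.of_forall fun h => by
        simp_rw [div_eq_mul_inv]
        exact (((aux_cont_iInf _).sub (aux_cont_iInf c)).aestronglyMeasurable.mul
          hg_meas.aestronglyMeasurable).mul_const _)
      (by
        filter_upwards [hsmall] with h hh
        refine Eventually.of_forall fun x => ?_
        obtain ⟨hh1, hh0⟩ := hh
        have hb := aux_bound c j e he x h hh1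
        have habs : 0 < |h| := abs_pos.mpr hh0
        rw [Real.norm_eq_abs, abs_div, abs_mul]
        rw [div_le_iff₀ habs]
        calc |(⨅ u, ‖x - (c + h • (Pi.single j e : Fin k → EuclideanSpace ℝ (Fin d))) u‖ ^ 2)
              - ⨅ u, ‖x - c u‖ ^ 2| * |g x|
            ≤ (|h| * (2 * ‖x - c j‖ + 1)) * M :=
              mul_le_mul hb (hM x) (abs_nonneg _) (by positivity)
        _ = (2 * ‖x - c j‖ + 1) * M * |h| := by ring)
      ((((continuous_const.mul ((continuous_id.sub continuous_const).norm)).add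
          continuous_const).mul continuous_const).continuousOn.integrableOn_compact hK)
      (by
        refine (ae_restrict_of_ae hAE).mono fun x hx => ?_
        have ht := (aux_pointwise c j e he x hx).mul_const (g x)
        exact ht.congr fun h => by ring)
    exact hDCT.congr fun h => (hquot j ℓ h).symm
  -- integrability on the cells
  have hVmeas : ∀ j : Fin k, MeasurableSet (voronoiCell c j ∩ K) :=
    fun j => (aux_voronoi_closed c j).measurableSet.inter hK.measurableSet
  have hVfin : ∀ j : Fin k, volume (voronoiCell c j ∩ K) ≠ ⊤ :=
    fun j => (lt_of_le_of_lt (measure_mono Set.inter_subset_right) hK.measure_lt_top).ne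
  have hIg : ∀ j : Fin k, IntegrableOn g (voronoiCell c j ∩ K) := fun j =>
    Measure.integrableOn_of_bounded (hVfin j) hg_meas.aestronglyMeasurable
      (Eventually.of_forall fun x => by simpa [Real.norm_eq_abs] using hM x)
  have hIgx : ∀ j : Fin k, IntegrableOn (fun x => g x • x) (voronoiCell c j ∩ K) := by
    intro j
    refine Measure.integrableOn_of_bounded (M := M * R) (hVfin j)
      ((hg_meas.aestronglyMeasurable).smul aestronglyMeasurable_id) ?_
    rw [ae_restrict_iff' (hVmeas j)]
    refine Eventually.of_forall fun x hx => ?_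
    rw [norm_smul, Real.norm_eq_abs]
    exact mul_le_mul (hM x) (hR x hx.2) (norm_nonneg _) hM0
  -- value of the limit in terms of the centroid defect
  have hDval : ∀ (j : Fin k) (ℓ : Fin d),
      (∫ x in voronoiCell c j ∩ K,
        -(2 * (inner ℝ (x - c j) (EuclideanSpace.single ℓ (1:ℝ)) : ℝ)) * g x)
      = -2 * ((∫ x in voronoiCell c j ∩ K, g x • x)
          - (∫ x in voronoiCell c j ∩ K, g x) • c j) ℓ := by
    intro j ℓ
    set e : EuclideanSpace ℝ (Fin d) := EuclideanSpace.single ℓ (1:ℝ) with hedef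
    have h2 : ∀ x : EuclideanSpace ℝ (Fin d),
        -(2 * (inner ℝ (x - c j) e : ℝ)) * g x
          = -2 * ((innerSL ℝ e) (g x • (x - c j))) := by
      intro x
      rw [ContinuousLinearMap.map_smul]
      simp only [innerSL_apply_apply, smul_eq_mul]
      rw [real_inner_comm]
      ring
    simp_rw [h2]
    have hint : IntegrableOn (fun x => g x • (x - c j)) (voronoiCell c j ∩ K) := by
      have : (fun x => g x • (x - c j))
          = fun x : EuclideanSpace ℝ (Fin d) => g x • x - g x • (c j) := by
        funext x; rw [smul_sub]
      rw [this]
      exact (hIgx j).sub ((hIg j).smul_const (c j))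
    rw [integral_const_mul, ContinuousLinearMap.integral_comp_comm _ hint]
    have hsplit : (∫ x in voronoiCell c j ∩ K, g x • (x - c j))
        = (∫ x in voronoiCell c j ∩ K, g x • x)
          - (∫ x in voronoiCell c j ∩ K, g x) • c j := by
      have : (fun x => g x • (x - c j))
          = fun x : EuclideanSpace ℝ (Fin d) => g x • x - g x • (c j) := by
        funext x; rw [smul_sub]
      rw [this, integral_sub (hIgx j) ((hIg j).smul_const (c j)), integral_smul_const]
    rw [hsplit]
    congr 1
    simp [hedef, innerSL_apply_apply, EuclideanSpace.inner_single_left]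
  -- final equivalence
  constructor
  · intro H j
    have hz : ∀ ℓ : Fin d,
        ((∫ x in voronoiCell c j ∩ K, g x • x)
          - (∫ x in voronoiCell c j ∩ K, g x) • c j) ℓ = 0 := by
      intro ℓ
      have := tendsto_nhds_unique (hkey j ℓ) (H j ℓ)
      rw [hDval j ℓ] at this
      linarith
    have hzero : (∫ x in voronoiCell c j ∩ K, g x • x)
        - (∫ x in voronoiCell c j ∩ K, g x) • c j = 0 := by
      ext ℓ'
      simpa using hz ℓ'
    rw [sub_eq_zero] at hzero
    rw [eq_comm, inv_smul_eq_iff₀ (hmass j)]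
    exact hzero
  · intro H j ℓ
    have hzero : (∫ x in voronoiCell c j ∩ K, g x • x)
        - (∫ x in voronoiCell c j ∩ K, g x) • c j = 0 := by
      rw [sub_eq_zero]
      have hH := H j
      rw [eq_comm, inv_smul_eq_iff₀ (hmass j)] at hH
      exact hH
    have : (∫ x in voronoiCell c j ∩ K,
        -(2 * (inner ℝ (x - c j) (EuclideanSpace.single ℓ (1:ℝ)) : ℝ)) * g x) = 0 := by
      rw [hDval j ℓ, hzero]
      simp
    have hlim := hkey j ℓ
    rw [this] at hlim
    exact hlim

end FOCMain
end
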